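/- For all nonnegative integers n, m, s one has A_{1/2}(n+mp^{s+1})/φ(A_{1/2}(⌊n/p⌋+mp^s)) − A_{1/2}(n)/φ(A_{1/2}(⌊n/p⌋)) ∈ [p^{s+1}]_q·R (as elements of Q). -/

import Mathlib

/- Setting (following Dwork-type q-congruences / q-hypergeometric papers):
`p` is an odd prime, `R = ℤ_p[[q−1]]` is implemented as `PowerSeries ℤ_[p]`, the power-series
variable `PowerSeries.X` standing for `q − 1`. -/

noncomputable section
open PowerSeries
namespace QDwork

variable (p : ℕ) [Fact p.Prime]

/-- `R = ℤ_p[[q−1]]`. -/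
abbrev R : Type := PowerSeries ℤ_[p]

/-- `q = 1 + (q−1) ∈ R`. -/
def qq : R p := 1 + PowerSeries.X

/-- `q^a = Σ_{i≥0} binom(a,i)(q−1)^i ∈ R` for `a ∈ ℤ_p`, using the p-adically interpolated
binomial coefficients `Ring.choose` (`ℤ_p` is a binomial ring). -/
def qpow (a : ℤ_[p]) : R p := PowerSeries.mk fun i => Ring.choose a i

/-- The q-number `[a]_q = (q^a−1)/(q−1) = Σ_{i≥1} binom(a,i)(q−1)^{i−1} ∈ R` for `a ∈ ℤ_p`. -/
def qnum (a : ℤ_[p]) : R p := PowerSeries.mk fun i => Ring.choose a (i + 1)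

/-- The q-number `[n]_q = 1 + q + ⋯ + q^{n−1} ∈ R` of a natural number `n`. -/
def qnat (n : ℕ) : R p := ∑ i ∈ Finset.range n, qq p ^ i

/-- `1/2 ∈ ℤ_p` (recall `p` is odd, so `2` is a unit of `ℤ_p`). -/
def half : ℤ_[p] := Ring.inverse 2

/-- The Frobenius endomorphism `φ` of `R = ℤ_p[[q−1]]`: the ring endomorphism fixing `ℤ_p`
with `φ(q) = q^p`, i.e. the substitution `f(q−1) ↦ f(q^p−1)` (legitimate since `q^p−1` has
zero constant term), described here through its coefficients. -/
def phiR (f : R p) : R p :=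
  PowerSeries.mk fun n => ∑ i ∈ Finset.range (n + 1),
    PowerSeries.coeff i f * PowerSeries.coeff n ((qq p ^ p - 1) ^ i)

/-- `Q = Frac(R)`. -/
abbrev Q : Type := FractionRing (R p)

/-- The canonical injection `R → Q`. -/
def ι : R p →+* Q p := algebraMap (R p) (Q p)

/-- `q ∈ Q`. -/
def qQ : Q p := ι p (qq p)

/-- The extension of the Frobenius `φ` to `Q = Frac(R)` (computed via a choice of a fraction
representation `x = r/s`, `φ(x) = φ(r)/φ(s)`). -/
def phiQ (x : Q p) : Q p :=
  ι p (phiR p (IsLocalization.sec (nonZeroDivisors (R p)) x).1) /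
    ι p (phiR p ((IsLocalization.sec (nonZeroDivisors (R p)) x).2 : R p))

/-- `C_θ(n) = ∏_{ν=0}^{n−1} [θ+ν]_q ∈ R`. -/
def Cq (θ : ℤ_[p]) (n : ℕ) : R p := ∏ ν ∈ Finset.range n, qnum p (θ + (ν : ℤ_[p]))

/-- `A_{1/2}(n) = C_{1/2}(n)/C_1(n) ∈ Q`. -/
def Ahalf (n : ℕ) : Q p := ι p (Cq p (half p) n) / ι p (Cq p 1 n)

section Aux
variable {p}


lemma coeff_qpow (a : ℤ_[p]) (i : ℕ) : coeff i (qpow p a) = Ring.choose a i := by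
  simp [qpow]

lemma coeff_qnum (a : ℤ_[p]) (i : ℕ) : coeff i (qnum p a) = Ring.choose a (i + 1) := by
  simp [qnum]

lemma qpow_add (a b : ℤ_[p]) : qpow p (a + b) = qpow p a * qpow p b := by
  ext i
  rw [coeff_qpow, PowerSeries.coeff_mul, Ring.add_choose_eq i (Commute.all a b)]
  exact Finset.sum_congr rfl fun ij _ => by rw [coeff_qpow, coeff_qpow]

lemma qpow_natCast (n : ℕ) : qpow p (n : ℤ_[p]) = qq p ^ n := by
  induction n with
  | zero =>
    ext i
    simp only [Nat.cast_zero, coeff_qpow, Ring.choose_natCast, pow_zero]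
    rcases i with _ | i
    · simp
    · simp [Nat.choose_eq_zero_of_lt, PowerSeries.coeff_one]
  | succ n ih =>
    have h1 : qpow p (1 : ℤ_[p]) = qq p := by
      ext i
      simp only [coeff_qpow]
      have : ((1 : ℕ) : ℤ_[p]) = (1 : ℤ_[p]) := by norm_num
      rw [← this, Ring.choose_natCast]
      rcases i with _ | _ | i <;>
        simp [qq, PowerSeries.coeff_one, PowerSeries.coeff_X, Nat.choose_eq_zero_of_lt]
    push_cast
    rw [qpow_add, ih, h1, pow_succ]

lemma X_mul_qnum (a : ℤ_[p]) : PowerSeries.X * qnum p a = qpow p a - 1 := by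
  ext i
  rcases i with _ | i
  · simp only [PowerSeries.coeff_zero_eq_constantCoeff, map_sub, map_mul,
      PowerSeries.constantCoeff_X, zero_mul, map_one]
    rw [← PowerSeries.coeff_zero_eq_constantCoeff_apply, coeff_qpow]
    simp
  · rw [PowerSeries.coeff_succ_X_mul]
    simp [coeff_qnum, coeff_qpow, PowerSeries.coeff_one]

lemma qq_sub_one : qq p - 1 = PowerSeries.X := by simp [qq]

lemma X_mul_qnat (n : ℕ) : PowerSeries.X * qnat p n = qq p ^ n - 1 := by
  have := geom_sum_mul (qq p) n
  rw [qq_sub_one] at this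
  rw [mul_comm, qnat, this]

lemma X_ne_zero' : (PowerSeries.X : R p) ≠ 0 := PowerSeries.X_ne_zero

lemma qnum_natCast (n : ℕ) : qnum p (n : ℤ_[p]) = qnat p n := by
  apply mul_left_cancel₀ (X_ne_zero' (p := p))
  rw [X_mul_qnum, X_mul_qnat, qpow_natCast]

lemma qnum_one : qnum p (1 : ℤ_[p]) = 1 := by
  have : ((1:ℕ) : ℤ_[p]) = 1 := by norm_num
  rw [← this, qnum_natCast]
  simp [qnat]



variable (p) in
def gg : R p := qq p ^ p - 1

lemma constantCoeff_gg : constantCoeff (gg p) = 0 := by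
  simp [gg, qq]

lemma coeff_gg_pow {n i : ℕ} (h : n < i) : coeff n (gg p ^ i) = 0 := by
  have hX : (PowerSeries.X : R p) ∣ gg p := PowerSeries.X_dvd_iff.mpr constantCoeff_gg
  exact (PowerSeries.X_pow_dvd_iff.mp (pow_dvd_pow_of_dvd hX i)) n h

lemma coeff_phiR (f : R p) (n : ℕ) :
    coeff n (phiR p f) = ∑ i ∈ Finset.range (n + 1),
      coeff i f * coeff n (gg p ^ i) := by
  simp [phiR, gg]

lemma coeff_aeval_trunc (f : R p) {n N : ℕ} (h : n < N) :
    coeff n (Polynomial.aeval (gg p) (trunc N f)) = coeff n (phiR p f) := by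
  have h2 : (trunc N f).natDegree < N := by
    rcases eq_or_ne (trunc N f) 0 with h0 | h0
    · simp [h0]; omega
    · exact (Polynomial.natDegree_lt_iff_degree_lt h0).mpr (degree_trunc_lt f N)
  rw [Polynomial.aeval_eq_sum_range' h2 (gg p), coeff_phiR, map_sum]
  rw [show ∀ s : Finset ℕ, ∀ g : ℕ → R p, (∑ i ∈ s, coeff n (g i)) = ∑ i ∈ s, coeff n (g i)
    from fun _ _ => rfl]
  have : ∀ i ∈ Finset.range N, coeff n ((trunc N f).coeff i • gg p ^ i)
      = coeff i f * coeff n (gg p ^ i) := by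
    intro i hi
    rw [map_smul, smul_eq_mul, coeff_trunc]
    simp [Finset.mem_range.mp hi]
  rw [Finset.sum_congr rfl this]
  refine (Finset.sum_subset (Finset.range_subset_range.mpr h) ?_).symm
  intro i _ hi
  rw [coeff_gg_pow (by simpa using hi), mul_zero]

lemma phiR_mul (f g : R p) : phiR p (f * g) = phiR p f * phiR p g := by
  ext n
  have hn : n < n + 1 := Nat.lt_succ_self n
  rw [← coeff_aeval_trunc (f * g) hn]
  have key : coeff n (Polynomial.aeval (gg p) (trunc (n+1) (f * g)))
      = coeff n (Polynomial.aeval (gg p) (trunc (n+1) f * trunc (n+1) g)) := by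
    have hD : ∀ d < n + 1,
        (trunc (n+1) f * trunc (n+1) g - trunc (n+1) (f * g)).coeff d = 0 := by
      intro d hd
      rw [Polynomial.coeff_sub, Polynomial.coeff_mul, coeff_trunc, if_pos hd,
        PowerSeries.coeff_mul, sub_eq_zero]
      refine Finset.sum_congr rfl fun ij hij => ?_
      have hij' := Finset.HasAntidiagonal.mem_antidiagonal.mp hij
      rw [coeff_trunc, coeff_trunc, if_pos (by omega), if_pos (by omega)]
    have : coeff n (Polynomial.aeval (gg p)
        (trunc (n+1) f * trunc (n+1) g - trunc (n+1) (f * g))) = 0 := by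
      set D := trunc (n+1) f * trunc (n+1) g - trunc (n+1) (f * g) with hDdef
      rw [Polynomial.aeval_eq_sum_range' (Nat.lt_succ_self D.natDegree) (gg p), map_sum]
      refine Finset.sum_eq_zero fun i _ => ?_
      rcases lt_or_ge i (n+1) with h | h
      · rw [hD i h, zero_smul, map_zero]
      · rw [map_smul, coeff_gg_pow (by omega), smul_zero]
    rw [map_sub, map_sub] at this
    have := sub_eq_zero.mp this
    rw [this]
  rw [key, map_mul, PowerSeries.coeff_mul, PowerSeries.coeff_mul]
  refine Finset.sum_congr rfl fun ij hij => ?_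
  have hij' := Finset.HasAntidiagonal.mem_antidiagonal.mp hij
  rw [coeff_aeval_trunc f (by omega), coeff_aeval_trunc g (by omega)]

lemma phiR_one : phiR p 1 = 1 := by
  ext n
  rw [← coeff_aeval_trunc 1 (Nat.lt_succ_self n), trunc_one, map_one]

lemma phiR_add (f g : R p) : phiR p (f + g) = phiR p f + phiR p g := by
  ext n
  simp only [coeff_phiR, map_add, add_mul, Finset.sum_add_distrib]

variable (p) in
def phiRHom : R p →+* R p where
  toFun := phiR p
  map_one' := phiR_one
  map_mul' := phiR_mul
  map_zero' := by
    show phiR p 0 = 0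
    have := phiR_add (0 : R p) 0
    simp only [add_zero] at this
    exact left_eq_add.mp this
  map_add' := phiR_add

lemma phiR_eq_hom : phiR p = ⇑(phiRHom p) := rfl

lemma phiR_X : phiR p PowerSeries.X = gg p := by
  ext n
  rw [← coeff_aeval_trunc PowerSeries.X (show n < n + 2 by omega), trunc_X,
    Polynomial.aeval_X]

lemma phiR_qq : phiR p (qq p) = qq p ^ p := by
  rw [show qq p = 1 + PowerSeries.X from rfl, phiR_add, phiR_one, phiR_X, gg,
    show (1 + PowerSeries.X : R p) = qq p from rfl]
  ring

lemma phiR_qpow (a : ℤ_[p]) : phiR p (qpow p a) = qpow p ((p : ℤ_[p]) * a) := by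
  ext n
  have hf : Continuous fun a : ℤ_[p] => ∑ i ∈ Finset.range (n + 1),
      Ring.choose a i * coeff n (gg p ^ i) := by
    refine continuous_finset_sum _ fun i _ => ?_
    exact (PadicInt.continuous_choose i).mul continuous_const
  have hg : Continuous fun a : ℤ_[p] => Ring.choose ((p : ℤ_[p]) * a) n :=
    (PadicInt.continuous_choose n).comp (continuous_const.mul continuous_id)
  have heq : (fun a : ℤ_[p] => ∑ i ∈ Finset.range (n + 1),
      Ring.choose a i * coeff n (gg p ^ i))
      = fun a : ℤ_[p] => Ring.choose ((p : ℤ_[p]) * a) n := by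
    refine PadicInt.denseRange_natCast.equalizer hf hg (funext fun k => ?_)
    have lhs_eq : ∑ i ∈ Finset.range (n + 1),
        Ring.choose ((k : ℤ_[p])) i * coeff n (gg p ^ i) = coeff n (phiR p (qpow p k)) := by
      rw [coeff_phiR]
      exact Finset.sum_congr rfl fun i _ => by rw [coeff_qpow]
    show ∑ i ∈ Finset.range (n + 1), Ring.choose ((k : ℤ_[p])) i * coeff n (gg p ^ i)
        = Ring.choose ((p : ℤ_[p]) * (k : ℤ_[p])) n
    rw [lhs_eq, qpow_natCast, phiR_eq_hom, map_pow, ← phiR_eq_hom, phiR_qq, ← pow_mul,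
      ← qpow_natCast]
    rw [coeff_qpow]
    congr 1
    push_cast
    ring
  have := congrFun heq a
  rw [coeff_qpow, ← this, coeff_phiR]
  exact (Finset.sum_congr rfl fun i _ => by rw [coeff_qpow]).symm

lemma X_mul_qnat' (n : ℕ) : PowerSeries.X * qnat p n = qq p ^ n - 1 := X_mul_qnat n

lemma qnum_pmul (a : ℤ_[p]) : qnum p ((p : ℤ_[p]) * a) = qnat p p * phiR p (qnum p a) := by
  apply mul_left_cancel₀ (X_ne_zero' (p := p))
  rw [X_mul_qnum, ← phiR_qpow]
  have : qpow p a = PowerSeries.X * qnum p a + 1 := by rw [X_mul_qnum]; ring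
  rw [this, phiR_add, phiR_one, phiR_mul, phiR_X]
  rw [show gg p = PowerSeries.X * qnat p p from by rw [X_mul_qnat]; rfl]
  ring

def hh : R p := PowerSeries.mk fun k => (p.choose (k+1) : ℤ_[p])

lemma coeff_gg (n : ℕ) : coeff n (gg p) = if n = 0 then 0 else (p.choose n : ℤ_[p]) := by
  rw [gg, ← qpow_natCast, map_sub, coeff_qpow, Ring.choose_natCast, PowerSeries.coeff_one]
  rcases n with _ | n <;> simp

lemma gg_eq_X_mul : gg p = PowerSeries.X * hh := by
  ext n
  rcases n with _ | n
  · simp [coeff_gg]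
  · rw [PowerSeries.coeff_succ_X_mul, coeff_gg]
    simp [hh]

lemma coeff_gg_pow_self (d : ℕ) : coeff d (gg p ^ d) = (p : ℤ_[p]) ^ d := by
  have hc := PowerSeries.coeff_X_pow_mul ((hh : R p) ^ d) d 0
  rw [zero_add] at hc
  rw [gg_eq_X_mul, mul_pow, hc, PowerSeries.coeff_zero_eq_constantCoeff, map_pow]
  congr 1
  simp [hh, PowerSeries.constantCoeff_mk]

lemma p_ne_zero' : ((p : ℤ_[p])) ≠ 0 :=
  Nat.cast_ne_zero.mpr (Fact.out : p.Prime).ne_zero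

lemma phiR_injective : Function.Injective (phiR p) := by
  rw [phiR_eq_hom]
  refine (injective_iff_map_eq_zero _).mpr fun f hf => ?_
  by_contra hne
  classical
  have hex : ∃ d, coeff d f ≠ 0 := by
    by_contra hc
    push_neg at hc
    exact hne (PowerSeries.ext hc)
  set d := Nat.find hex with hd
  have hmin : ∀ i < d, coeff i f = 0 := fun i hi => by
    by_contra hc; exact Nat.find_min hex hi hc
  have h0 : coeff d (phiR p f) = coeff d f * (p : ℤ_[p]) ^ d := by
    rw [coeff_phiR, Finset.sum_eq_single d]
    · rw [coeff_gg_pow_self]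
    · intro i hi hne'
      rcases lt_or_ge i d with h | h
      · rw [hmin i h, zero_mul]
      · have : i = d := le_antisymm (by simpa using Nat.lt_succ_iff.mp (Finset.mem_range.mp hi)) h
        exact absurd this hne'
    · intro h; exact absurd (Finset.mem_range.mpr (Nat.lt_succ_self d)) h
  rw [show phiR p f = phiRHom p f from rfl, hf, map_zero] at h0
  exact Nat.find_spec hex (by
    rcases mul_eq_zero.mp h0.symm with h | h
    · exact h
    · exact absurd h (pow_ne_zero d p_ne_zero'))

lemma constantCoeff_qnum (a : ℤ_[p]) : constantCoeff (qnum p a) = a := by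
  rw [← PowerSeries.coeff_zero_eq_constantCoeff_apply, coeff_qnum, zero_add,
    Ring.choose_one_right]

lemma qnum_ne_zero {a : ℤ_[p]} (ha : a ≠ 0) : qnum p a ≠ 0 := fun h => by
  have := constantCoeff_qnum a
  rw [h, map_zero] at this
  exact ha this.symm

lemma isUnit_qnum {a : ℤ_[p]} (ha : IsUnit a) : IsUnit (qnum p a) := by
  rw [PowerSeries.isUnit_iff_constantCoeff, constantCoeff_qnum]
  exact ha

lemma norm_natCast_eq_one {k : ℕ} (h : ¬ p ∣ k) : ‖(k : ℤ_[p])‖ = 1 := by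
  have hiff := PadicInt.norm_int_lt_one_iff_dvd (p := p) (k : ℤ)
  have h2 : ¬ ((p : ℤ) ∣ (k : ℤ)) := by exact_mod_cast h
  have h3 : ¬ ‖((k : ℤ) : ℤ_[p])‖ < 1 := fun hc => h2 (hiff.mp hc)
  have h4 : ((k : ℤ) : ℤ_[p]) = (k : ℤ_[p]) := by push_cast; ring
  rw [h4] at h3
  exact le_antisymm (PadicInt.norm_le_one _) (not_lt.mp h3)

lemma isUnit_natCast_of_not_dvd {k : ℕ} (h : ¬ p ∣ k) : IsUnit (k : ℤ_[p]) :=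
  PadicInt.isUnit_iff.mpr (norm_natCast_eq_one h)

lemma isUnit_two (hp : p ≠ 2) : IsUnit (2 : ℤ_[p]) := by
  have h2 : ¬ p ∣ 2 := fun hd =>
    hp ((Nat.prime_dvd_prime_iff_eq (Fact.out : p.Prime) Nat.prime_two).mp hd)
  have := isUnit_natCast_of_not_dvd h2
  simpa using this

lemma qnat_one : qnat p 1 = 1 := by simp [qnat]

lemma qnum_ppow (j : ℕ) (c : ℤ_[p]) :
    ∃ w : R p, qnum p (((p ^ j : ℕ) : ℤ_[p]) * c) = qnat p (p ^ j) * w := by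
  induction j generalizing c with
  | zero => exact ⟨qnum p c, by simp [qnat_one]⟩
  | succ j ih =>
    obtain ⟨w, hw⟩ := ih c
    obtain ⟨w', hw'⟩ := ih 1
    refine ⟨phiR p w, ?_⟩
    have hcast : ((p ^ (j+1) : ℕ) : ℤ_[p]) * c = (p : ℤ_[p]) * (((p ^ j : ℕ) : ℤ_[p]) * c) := by
      push_cast; ring
    have hqnat : qnat p p * phiR p (qnat p (p ^ j)) = qnat p (p ^ (j + 1)) := by
      have h1 : qnat p (p ^ j) = qnum p (((p ^ j : ℕ)) : ℤ_[p]) := (qnum_natCast _).symm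
      have h2 : qnat p (p ^ (j+1)) = qnum p (((p ^ (j+1) : ℕ)) : ℤ_[p]) := (qnum_natCast _).symm
      rw [h1, h2, ← qnum_pmul]
      congr 1
      push_cast; ring
    rw [hcast, qnum_pmul, hw, phiR_eq_hom, map_mul, ← phiR_eq_hom, ← mul_assoc, hqnat]

lemma qnum_shift (j : ℕ) (x c : ℤ_[p]) :
    ∃ w : R p, qnum p (x + ((p ^ j : ℕ) : ℤ_[p]) * c) = qnum p x + qnat p (p ^ j) * w := by
  obtain ⟨w, hw⟩ := qnum_ppow j c
  refine ⟨qpow p x * w, ?_⟩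
  apply mul_left_cancel₀ (X_ne_zero' (p := p))
  linear_combination X_mul_qnum (x + ((p ^ j : ℕ) : ℤ_[p]) * c) - X_mul_qnum x
    + qpow_add x (((p ^ j : ℕ) : ℤ_[p]) * c)
    - qpow p x * X_mul_qnum (((p ^ j : ℕ) : ℤ_[p]) * c)
    + PowerSeries.X * qpow p x * hw

-- natural number lemmas
lemma mod_eq_iff_dvd_two_mul (hp : p ≠ 2) (ν : ℕ) :
    ν % p = (p - 1) / 2 ↔ p ∣ 2 * ν + 1 := by
  have hprime : p.Prime := Fact.out
  have hp2 : 2 ≤ p := hprime.two_le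
  have hodd : p % 2 = 1 := Nat.Prime.eq_two_or_odd hprime |>.resolve_left hp
  have hdm := Nat.div_add_mod ν p
  set q := ν / p; set r := ν % p
  have hr : r < p := Nat.mod_lt _ (by omega)
  have e1 : p * (2 * q + 1) = 2 * (p * q) + p := by ring
  constructor
  · intro h
    refine ⟨2 * q + 1, ?_⟩
    omega
  · rintro ⟨k, hk⟩
    have hk1 : k = 2 * q + 1 := by
      rcases Nat.lt_or_ge k (2 * q + 1) with h | h
      · have : p * k ≤ p * (2 * q) := Nat.mul_le_mul_left p (by omega)
        have e2 : p * (2 * q) = 2 * (p * q) := by ring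
        omega
      · rcases Nat.lt_or_ge (2 * q + 1) k with h' | h'
        · have : p * (2 * q + 2) ≤ p * k := Nat.mul_le_mul_left p (by omega)
          have e2 : p * (2 * q + 2) = 2 * (p * q) + 2 * p := by ring
          omega
        · omega
    rw [hk1] at hk
    omega

lemma mod_eq_iff_dvd_succ (ν : ℕ) : ν % p = p - 1 ↔ p ∣ ν + 1 := by
  have hprime : p.Prime := Fact.out
  have hp2 : 2 ≤ p := hprime.two_le
  have hdm := Nat.div_add_mod ν p
  set q := ν / p; set r := ν % p
  have hr : r < p := Nat.mod_lt _ (by omega)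
  have e1 : p * (q + 1) = p * q + p := by ring
  constructor
  · intro h
    exact ⟨q + 1, by omega⟩
  · rintro ⟨k, hk⟩
    have hk1 : k = q + 1 := by
      rcases Nat.lt_or_ge k (q + 1) with h | h
      · have : p * k ≤ p * q := Nat.mul_le_mul_left p (by omega)
        omega
      · rcases Nat.lt_or_ge (q + 1) k with h' | h'
        · have : p * (q + 2) ≤ p * k := Nat.mul_le_mul_left p (by omega)
          have e2 : p * (q + 2) = p * q + 2 * p := by ring
          omega
        · omega
    rw [hk1] at hk
    omega

lemma pow_mod_two (hp : p ≠ 2) (j : ℕ) : p ^ j % 2 = 1 := by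
  have hodd : p % 2 = 1 := Nat.Prime.eq_two_or_odd (Fact.out) |>.resolve_left hp
  rw [Nat.pow_mod, hodd, one_pow]
  rfl


lemma hshift_mod (hp : p ≠ 2) (s ν : ℕ) :
    ((p ^ (s + 1) + 1) / 2 + ν) % p = 0 ↔ ν % p = (p - 1) / 2 := by
  have hprime : p.Prime := Fact.out
  have hp0 : 0 < p := hprime.pos
  have hNodd := pow_mod_two hp (s + 1)
  set h := (p ^ (s + 1) + 1) / 2 with hh
  have h2h : 2 * h = p ^ (s + 1) + 1 := by omega
  have key : ∀ x : ℕ, p ∣ 2 * x ↔ p ∣ x := fun x =>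
    ⟨fun hd => ((Nat.Prime.dvd_mul hprime).mp hd).resolve_left
      (fun h2 => hp (((Nat.prime_dvd_prime_iff_eq hprime Nat.prime_two).mp h2))),
     fun hd => hd.mul_left 2⟩
  have e : 2 * (h + ν) = p ^ (s + 1) + (2 * ν + 1) := by omega
  have hps : p ∣ p ^ (s + 1) := dvd_pow_self p (Nat.succ_ne_zero s)
  rw [mod_eq_iff_dvd_two_mul hp, ← Nat.dvd_iff_mod_eq_zero, ← key, e, Nat.dvd_add_right hps]

lemma prod_bad (θ : ℤ_[p]) {c : ℕ} (hc : c < p) (n : ℕ) :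
    ∏ ν ∈ (Finset.range n).filter (fun ν => ν % p = c), qnum p (θ + (ν : ℤ_[p]))
      = ∏ k ∈ Finset.range (n / p + if c < n % p then 1 else 0),
          qnum p (θ + ((p * k + c : ℕ) : ℤ_[p])) := by
  have hp0 : 0 < p := (Fact.out : p.Prime).pos
  have hdm' : p * (n / p) + n % p = n := Nat.div_add_mod n p
  have hrn : n % p < p := Nat.mod_lt _ hp0
  refine Finset.prod_nbij' (fun ν => ν / p) (fun k => p * k + c) ?_ ?_ ?_ ?_ ?_
  · intro ν hν
    obtain ⟨hlt, hmod⟩ : ν < n ∧ ν % p = c := by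
      simpa using hν
    have hdm : p * (ν / p) + c = ν := by rw [← hmod]; exact Nat.div_add_mod ν p
    rw [Finset.mem_range]
    rcases lt_trichotomy (ν / p) (n / p) with h | h | h
    · rcases Nat.lt_or_ge c (n % p) with hcc | hcc
      · rw [if_pos hcc]; omega
      · rw [if_neg (by omega)]; omega
    · rw [h] at hdm
      have hcc : c < n % p := by omega
      rw [if_pos hcc]; omega
    · exfalso
      have h1 : p * (n / p + 1) ≤ p * (ν / p) := Nat.mul_le_mul_left p (by omega)
      have e1 : p * (n / p + 1) = p * (n / p) + p := by ring
      omega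
  · intro k hk
    rw [Finset.mem_range] at hk
    simp only [Finset.mem_filter, Finset.mem_range]
    constructor
    · rcases Nat.lt_or_ge k (n / p) with h | h
      · have h1 : p * (k + 1) ≤ p * (n / p) := Nat.mul_le_mul_left p (by omega)
        have e1 : p * (k + 1) = p * k + p := by ring
        omega
      · rcases Nat.lt_or_ge c (n % p) with hcc | hcc
        · rw [if_pos hcc] at hk
          have hkk : k = n / p := by omega
          rw [hkk]; omega
        · rw [if_neg (by omega)] at hk; omega
    · rw [Nat.mul_add_mod]
      exact Nat.mod_eq_of_lt hc
  · intro ν hν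
    obtain ⟨hlt, hmod⟩ : ν < n ∧ ν % p = c := by simpa using hν
    have hdm : p * (ν / p) + c = ν := by rw [← hmod]; exact Nat.div_add_mod ν p
    omega
  · intro k hk
    rw [Nat.mul_add_div hp0, Nat.div_eq_of_lt hc, add_zero]
  · intro ν hν
    obtain ⟨hlt, hmod⟩ : ν < n ∧ ν % p = c := by simpa using hν
    have hdm : p * (ν / p) + c = ν := by rw [← hmod]; exact Nat.div_add_mod ν p
    rw [hdm]

variable (p) in
def Gp (n : ℕ) : R p :=
  ∏ ν ∈ (Finset.range n).filter (fun ν => ¬ ν % p = (p - 1) / 2),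
    qnum p (half p + (ν : ℤ_[p]))

variable (p) in
def Hp (n : ℕ) : R p :=
  ∏ ν ∈ (Finset.range n).filter (fun ν => ¬ ν % p = p - 1), qnum p (1 + (ν : ℤ_[p]))

variable (p) in
def Ep (n : ℕ) : R p :=
  if (p - 1) / 2 < n % p then qnum p (half p + ((p * (n / p) + (p - 1) / 2 : ℕ) : ℤ_[p])) else 1

lemma two_mul_half (hp : p ≠ 2) : (2 : ℤ_[p]) * half p = 1 :=
  Ring.mul_inverse_cancel 2 (isUnit_two hp)

lemma two_ne_zero' (hp : p ≠ 2) : (2 : ℤ_[p]) ≠ 0 := (isUnit_two hp).ne_zero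

lemma odd_p (hp : p ≠ 2) : p % 2 = 1 :=
  Nat.Prime.eq_two_or_odd (Fact.out) |>.resolve_left hp

lemma cast_c1 (hp : p ≠ 2) : (2 : ℤ_[p]) * (((p - 1) / 2 : ℕ) : ℤ_[p]) = (p : ℤ_[p]) - 1 := by
  have hodd := odd_p hp
  have h2 : 2 ≤ p := (Fact.out : p.Prime).two_le
  have hn : 2 * ((p - 1) / 2) = p - 1 := by omega
  have := congrArg (fun t : ℕ => (t : ℤ_[p])) hn
  push_cast [Nat.cast_sub (by omega : 1 ≤ p)] at this
  exact this

lemma half_add_c1 (hp : p ≠ 2) (k : ℕ) :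
    half p + ((p * k + (p - 1) / 2 : ℕ) : ℤ_[p]) = (p : ℤ_[p]) * (half p + (k : ℤ_[p])) := by
  apply mul_left_cancel₀ (two_ne_zero' hp)
  push_cast
  linear_combination (1 - (p : ℤ_[p])) * two_mul_half hp + cast_c1 hp

lemma one_add_c2 (k : ℕ) :
    (1 : ℤ_[p]) + ((p * k + (p - 1) : ℕ) : ℤ_[p]) = (p : ℤ_[p]) * (1 + (k : ℤ_[p])) := by
  have h2 : 1 ≤ p := (Fact.out : p.Prime).pos
  push_cast [Nat.cast_sub h2]
  ring

lemma c1_lt (hp : p ≠ 2) : (p - 1) / 2 < p := by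
  have h2 : 2 ≤ p := (Fact.out : p.Prime).two_le
  omega

lemma split_half (hp : p ≠ 2) (n : ℕ) :
    Cq p (half p) n = (qnat p p) ^ (n / p + if (p - 1) / 2 < n % p then 1 else 0)
      * phiR p (Cq p (half p) (n / p + if (p - 1) / 2 < n % p then 1 else 0)) * Gp p n := by
  rw [Cq, ← Finset.prod_filter_mul_prod_filter_not (Finset.range n) (fun ν => ν % p = (p-1)/2)]
  congr 1
  rw [prod_bad (half p) (c1_lt hp) n]
  have heach : ∀ k, qnum p (half p + ((p * k + (p - 1) / 2 : ℕ) : ℤ_[p]))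
      = qnat p p * phiR p (qnum p (half p + (k : ℤ_[p]))) := by
    intro k
    rw [half_add_c1 hp k, qnum_pmul]
  rw [Finset.prod_congr rfl (fun k _ => heach k), Finset.prod_mul_distrib,
    Finset.prod_const, Finset.card_range]
  congr 1
  rw [Cq, phiR_eq_hom, map_prod]

lemma split_one (n : ℕ) :
    Cq p 1 n = (qnat p p) ^ (n / p) * phiR p (Cq p 1 (n / p)) * Hp p n := by
  have hp2 : 2 ≤ p := (Fact.out : p.Prime).two_le
  have hc : p - 1 < p := by omega
  rw [Cq, ← Finset.prod_filter_mul_prod_filter_not (Finset.range n) (fun ν => ν % p = p - 1)]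
  congr 1
  rw [prod_bad (1 : ℤ_[p]) hc n]
  have hite : (if p - 1 < n % p then 1 else 0) = 0 :=
    if_neg (by have := Nat.mod_lt n (show 0 < p by omega); omega)
  rw [hite, add_zero]
  have heach : ∀ k, qnum p ((1 : ℤ_[p]) + ((p * k + (p - 1) : ℕ) : ℤ_[p]))
      = qnat p p * phiR p (qnum p (1 + (k : ℤ_[p]))) := by
    intro k
    rw [one_add_c2 k, qnum_pmul]
  rw [Finset.prod_congr rfl (fun k _ => heach k), Finset.prod_mul_distrib,
    Finset.prod_const, Finset.card_range]
  congr 1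
  rw [Cq, phiR_eq_hom, map_prod]

variable (p) in
def Iq (s : ℕ) : Ideal (R p) := Ideal.span {qnat p (p ^ (s + 1))}

variable (p) in
def mkq (s : ℕ) : R p →+* R p ⧸ Iq p s := Ideal.Quotient.mk _

variable (p) in
def Fq (j : ℕ) : R p := if j % p = 0 then 1 else qnum p (j : ℤ_[p])

lemma mkq_qnat_N (s : ℕ) : mkq p s (qnat p (p ^ (s + 1))) = 0 :=
  Ideal.Quotient.eq_zero_iff_mem.mpr (Ideal.mem_span_singleton_self _)

lemma mkq_qnum_shift (s : ℕ) (x c : ℤ_[p]) :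
    mkq p s (qnum p (x + ((p ^ (s + 1) : ℕ) : ℤ_[p]) * c)) = mkq p s (qnum p x) := by
  obtain ⟨w, hw⟩ := qnum_shift (s + 1) x c
  rw [hw, map_add, map_mul, mkq_qnat_N, zero_mul, add_zero]

lemma N_pos : 0 < p ^ (s + 1) := Nat.pow_pos (Fact.out : p.Prime).pos

lemma mod_p_add_N (s a : ℕ) : (a + p ^ (s + 1)) % p = a % p := by
  have : a + p ^ (s + 1) = a + p ^ s * p := by rw [pow_succ]
  rw [this, Nat.add_mul_mod_self_right]

lemma mkq_Fq_add_N (s a : ℕ) : mkq p s (Fq p (a + p ^ (s + 1))) = mkq p s (Fq p a) := by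
  rw [Fq, Fq, mod_p_add_N]
  by_cases h : a % p = 0
  · rw [if_pos h, if_pos h]
  · rw [if_neg h, if_neg h]
    have harg : ((a + p ^ (s + 1) : ℕ) : ℤ_[p])
        = (a : ℤ_[p]) + ((p ^ (s + 1) : ℕ) : ℤ_[p]) * 1 := by push_cast; ring
    rw [harg, mkq_qnum_shift]

lemma window1 (s : ℕ) (a : ℕ) :
    mkq p s (∏ j ∈ Finset.Ico a (a + p ^ (s + 1)), Fq p j)
      = mkq p s (∏ j ∈ Finset.range (p ^ (s + 1)), Fq p j) := by
  induction a with
  | zero => rw [Finset.range_eq_Ico, zero_add]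
  | succ a ih =>
    have hN : 0 < p ^ (s + 1) := Nat.pow_pos (Fact.out : p.Prime).pos
    have e1 : a + 1 + p ^ (s + 1) = (a + p ^ (s + 1)) + 1 := by omega
    rw [e1, Finset.prod_Ico_succ_top (by omega), map_mul, mkq_Fq_add_N]
    rw [Finset.prod_eq_prod_Ico_succ_bot (show a < a + p ^ (s+1) by omega), map_mul] at ih
    rw [← ih]
    ring

lemma window (s a m : ℕ) :
    mkq p s (∏ j ∈ Finset.Ico a (a + m * p ^ (s + 1)), Fq p j)
      = mkq p s (∏ j ∈ Finset.range (p ^ (s + 1)), Fq p j) ^ m := by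
  induction m with
  | zero => simp
  | succ m ih =>
    have e1 : a + (m + 1) * p ^ (s + 1) = (a + m * p ^ (s + 1)) + p ^ (s + 1) := by ring
    rw [e1, ← Finset.prod_Ico_consecutive (fun j => Fq p j)
      (show a ≤ a + m * p ^ (s + 1) by omega) (show a + m * p ^ (s+1) ≤ a + m * p ^ (s+1) + p ^ (s+1) by omega),
      map_mul, ih, window1]
    exact (pow_succ _ _).symm

lemma Hp_eq_F (n : ℕ) : Hp p n = ∏ j ∈ Finset.Ico 1 (1 + n), Fq p j := by
  rw [Finset.prod_Ico_eq_prod_range]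
  have e1 : 1 + n - 1 = n := by omega
  rw [e1, Hp, Finset.prod_filter]
  refine Finset.prod_congr rfl fun ν _ => ?_
  by_cases h : ν % p = p - 1
  · have h1 : (1 + ν) % p = 0 := by
      rw [← Nat.dvd_iff_mod_eq_zero, add_comm]
      exact (mod_eq_iff_dvd_succ ν).mp h
    rw [Fq, if_pos h1, if_neg (not_not_intro h)]
  · have h1 : ¬ (1 + ν) % p = 0 := fun hc => h ((mod_eq_iff_dvd_succ ν).mpr
      (by rw [add_comm]; exact Nat.dvd_iff_mod_eq_zero.mpr hc))
    rw [Fq, if_neg h1, if_pos h]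
    congr 1
    push_cast
    ring

lemma cast_hN (hp : p ≠ 2) (s : ℕ) :
    (2 : ℤ_[p]) * (((p ^ (s + 1) + 1) / 2 : ℕ) : ℤ_[p]) = (p : ℤ_[p]) ^ (s + 1) + 1 := by
  have hNodd := pow_mod_two hp (s + 1)
  have hn : 2 * ((p ^ (s + 1) + 1) / 2) = p ^ (s + 1) + 1 := by omega
  have := congrArg (fun t : ℕ => (t : ℤ_[p])) hn
  push_cast at this
  exact this

lemma mkq_Gp_eq_F (hp : p ≠ 2) (s n : ℕ) :
    mkq p s (Gp p n) = mkq p s (∏ j ∈ Finset.Ico ((p ^ (s + 1) + 1) / 2)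
      ((p ^ (s + 1) + 1) / 2 + n), Fq p j) := by
  rw [Finset.prod_Ico_eq_prod_range]
  have e1 : (p ^ (s + 1) + 1) / 2 + n - (p ^ (s + 1) + 1) / 2 = n := by omega
  rw [e1, Gp, Finset.prod_filter, map_prod, map_prod]
  refine Finset.prod_congr rfl fun ν _ => ?_
  by_cases hc : ν % p = (p - 1) / 2
  · rw [if_neg (not_not_intro hc), Fq, if_pos ((hshift_mod hp s ν).mpr hc), map_one]
  · rw [if_pos hc, Fq, if_neg (fun hx => hc ((hshift_mod hp s ν).mp hx))]
    have harg : half p + (ν : ℤ_[p])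
        = ((((p ^ (s + 1) + 1) / 2 + ν : ℕ)) : ℤ_[p]) + ((p ^ (s + 1) : ℕ) : ℤ_[p]) * (-(half p)) := by
      apply mul_left_cancel₀ (two_ne_zero' hp)
      push_cast
      linear_combination (1 + (p : ℤ_[p]) ^ (s+1)) * two_mul_half hp - cast_hN hp s
    rw [harg, mkq_qnum_shift]

lemma div_add_N (s n m : ℕ) : (n + m * p ^ (s + 1)) / p = n / p + m * p ^ s := by
  have e : m * p ^ (s + 1) = (m * p ^ s) * p := by ring
  rw [e, Nat.add_mul_div_right _ _ (Fact.out : p.Prime).pos]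

lemma mod_add_N (s n m : ℕ) : (n + m * p ^ (s + 1)) % p = n % p := by
  have e : m * p ^ (s + 1) = (m * p ^ s) * p := by ring
  rw [e, Nat.add_mul_mod_self_right]

lemma mkq_Ep (hp : p ≠ 2) (s n m : ℕ) :
    mkq p s (Ep p (n + m * p ^ (s + 1))) = mkq p s (Ep p n) := by
  rw [Ep, Ep, mod_add_N, div_add_N]
  by_cases hc : (p - 1) / 2 < n % p
  · rw [if_pos hc, if_pos hc]
    have harg : half p + ((p * (n / p + m * p ^ s) + (p - 1) / 2 : ℕ) : ℤ_[p])
        = (half p + ((p * (n / p) + (p - 1) / 2 : ℕ) : ℤ_[p]))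
          + ((p ^ (s + 1) : ℕ) : ℤ_[p]) * (m : ℤ_[p]) := by
      push_cast
      ring
    rw [harg, mkq_qnum_shift]
  · rw [if_neg hc, if_neg hc]

lemma step2 (hp : p ≠ 2) (s n m : ℕ) :
    mkq p s (Gp p (n + m * p ^ (s + 1)) * Ep p (n + m * p ^ (s + 1)) * Hp p n)
      = mkq p s (Gp p n * Ep p n * Hp p (n + m * p ^ (s + 1))) := by
  set N := p ^ (s + 1) with hN
  set W := mkq p s (∏ j ∈ Finset.range N, Fq p j) with hW
  set h := (N + 1) / 2 with hh
  have hG : mkq p s (Gp p (n + m * N)) = mkq p s (Gp p n) * W ^ m := by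
    rw [mkq_Gp_eq_F hp s, mkq_Gp_eq_F hp s]
    have e1 : h + (n + m * N) = (h + n) + m * N := by ring
    rw [e1, ← Finset.prod_Ico_consecutive (fun j => Fq p j)
      (show h ≤ h + n by omega) (show h + n ≤ h + n + m * N by omega), map_mul, window]
  have hH : mkq p s (Hp p (n + m * N)) = mkq p s (Hp p n) * W ^ m := by
    rw [Hp_eq_F, Hp_eq_F]
    have e1 : 1 + (n + m * N) = (1 + n) + m * N := by ring
    rw [e1, ← Finset.prod_Ico_consecutive (fun j => Fq p j)
      (show 1 ≤ 1 + n by omega) (show 1 + n ≤ 1 + n + m * N by omega), map_mul, window]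
  rw [map_mul, map_mul, map_mul, map_mul, hG, hH, mkq_Ep hp]
  ring

lemma half_add_nat_ne_zero (hp : p ≠ 2) (ν : ℕ) : half p + (ν : ℤ_[p]) ≠ 0 := by
  intro h
  have hcast : ((2 * ν + 1 : ℕ) : ℤ_[p]) = 2 * (half p + (ν : ℤ_[p])) := by
    push_cast
    linear_combination - two_mul_half hp
  rw [h, mul_zero] at hcast
  have := Nat.cast_eq_zero.mp hcast
  omega

lemma one_add_nat_ne_zero (ν : ℕ) : (1 : ℤ_[p]) + (ν : ℤ_[p]) ≠ 0 := by
  intro h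
  have hcast : ((ν + 1 : ℕ) : ℤ_[p]) = 0 := by push_cast; linear_combination h
  have := Nat.cast_eq_zero.mp hcast
  omega

lemma Cq_half_ne (hp : p ≠ 2) (n : ℕ) : Cq p (half p) n ≠ 0 :=
  Finset.prod_ne_zero_iff.mpr fun ν _ => qnum_ne_zero (half_add_nat_ne_zero hp ν)

lemma Cq_one_ne (n : ℕ) : Cq p 1 n ≠ 0 :=
  Finset.prod_ne_zero_iff.mpr fun ν _ => qnum_ne_zero (one_add_nat_ne_zero ν)

lemma phiR_ne_zero {f : R p} (hf : f ≠ 0) : phiR p f ≠ 0 := fun h =>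
  hf (phiR_injective (by rw [h, phiR_eq_hom, map_zero]))

lemma isUnit_Hp (n : ℕ) : IsUnit (Hp p n) := by
  rw [Hp]
  refine Finset.prod_induction _ IsUnit (fun a b => IsUnit.mul) isUnit_one ?_
  intro ν hν
  obtain ⟨-, hmod⟩ := Finset.mem_filter.mp hν
  have hdvd : ¬ p ∣ ν + 1 := fun hd => hmod ((mod_eq_iff_dvd_succ ν).mpr hd)
  have hcast : (1 : ℤ_[p]) + (ν : ℤ_[p]) = ((ν + 1 : ℕ) : ℤ_[p]) := by push_cast; ring
  rw [hcast]
  exact isUnit_qnum (isUnit_natCast_of_not_dvd hdvd)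

lemma iota_injective : Function.Injective (ι p) := IsFractionRing.injective (R p) (Q p)

lemma iota_ne_zero {f : R p} (hf : f ≠ 0) : ι p f ≠ 0 :=
  (map_ne_zero_iff (ι p) iota_injective).mpr hf

lemma phiQ_div (a b : R p) (hb : b ≠ 0) :
    phiQ p (ι p a / ι p b) = ι p (phiR p a) / ι p (phiR p b) := by
  set z := ι p a / ι p b with hz
  have hspec := IsLocalization.sec_spec (M := nonZeroDivisors (R p)) z
  set r := (IsLocalization.sec (nonZeroDivisors (R p)) z).1 with hr
  set t := (IsLocalization.sec (nonZeroDivisors (R p)) z).2 with ht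
  have htne : (t : R p) ≠ 0 := nonZeroDivisors.ne_zero t.2
  have hbQ : ι p b ≠ 0 := iota_ne_zero hb
  have htQ : ι p (t : R p) ≠ 0 := iota_ne_zero htne
  have h1 : ι p a * ι p (t : R p) = ι p r * ι p b := by
    have h2 : (ι p a / ι p b) * ι p (t : R p) = ι p r := hspec
    field_simp at h2
    linear_combination h2
  have hR : a * (t : R p) = r * b := iota_injective (by rw [map_mul, map_mul]; exact h1)
  have hphi : phiR p a * phiR p (t : R p) = phiR p r * phiR p b := by
    have := congrArg (fun x => phiR p x) hR
    simpa only [phiR_mul] using this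
  show ι p (phiR p r) / ι p (phiR p (t : R p)) = ι p (phiR p a) / ι p (phiR p b)
  rw [div_eq_div_iff (iota_ne_zero (phiR_ne_zero htne)) (iota_ne_zero (phiR_ne_zero hb)),
    ← map_mul, ← map_mul]
  exact congrArg (ι p) (by linear_combination - hphi)

lemma S1 (hp : p ≠ 2) (n : ℕ) :
    Ahalf p n / phiQ p (Ahalf p (n / p)) = ι p (Gp p n * Ep p n) / ι p (Hp p n) := by
  have hB := split_one (p := p) n
  have key : Cq p (half p) n * phiR p (Cq p 1 (n / p)) * Hp p n
      = Gp p n * Ep p n * (Cq p 1 n * phiR p (Cq p (half p) (n / p))) := by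
    have hA := split_half hp n
    by_cases hcc : (p - 1) / 2 < n % p
    · rw [if_pos hcc] at hA
      have hsucc : Cq p (half p) (n / p + 1)
          = Cq p (half p) (n / p) * qnum p (half p + ((n / p : ℕ) : ℤ_[p])) :=
        Finset.prod_range_succ _ _
      rw [hsucc, phiR_mul] at hA
      have hEp : Ep p n = qnat p p * phiR p (qnum p (half p + ((n / p : ℕ) : ℤ_[p]))) := by
        rw [Ep, if_pos hcc, half_add_c1 hp (n / p), qnum_pmul]
      rw [hA, hB, hEp]
      ring
    · rw [if_neg hcc, add_zero] at hA
      have hEp : Ep p n = 1 := if_neg hcc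
      rw [hA, hB, hEp]
      ring
  have hC1 : ι p (Cq p 1 n) ≠ 0 := iota_ne_zero (Cq_one_ne n)
  have hphiA : ι p (phiR p (Cq p (half p) (n / p))) ≠ 0 :=
    iota_ne_zero (phiR_ne_zero (Cq_half_ne hp _))
  have hphiB : ι p (phiR p (Cq p 1 (n / p))) ≠ 0 :=
    iota_ne_zero (phiR_ne_zero (Cq_one_ne _))
  have hH : ι p (Hp p n) ≠ 0 := iota_ne_zero (isUnit_Hp n).ne_zero
  have h2 : phiQ p (Ahalf p (n / p)) = ι p (phiR p (Cq p (half p) (n / p)))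
      / ι p (phiR p (Cq p 1 (n / p))) := by
    rw [show Ahalf p (n / p) = ι p (Cq p (half p) (n / p)) / ι p (Cq p 1 (n / p)) from rfl]
    exact phiQ_div _ _ (Cq_one_ne _)
  rw [show Ahalf p n = ι p (Cq p (half p) n) / ι p (Cq p 1 n) from rfl, h2]
  have hkey := congrArg (ι p) key
  simp only [map_mul] at hkey
  field_simp
  simp only [map_mul]
  linear_combination hkey


lemma dwork_corollary_2_ii_aux (hp : p ≠ 2) (n m s : ℕ) :
    ∃ r : R p,
      Ahalf p (n + m * p ^ (s + 1)) / phiQ p (Ahalf p (n / p + m * p ^ s)) -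
        Ahalf p n / phiQ p (Ahalf p (n / p)) = ι p (qnat p (p ^ (s + 1)) * r) := by
  have hdiv : (n + m * p ^ (s + 1)) / p = n / p + m * p ^ s := div_add_N s n m
  rw [← hdiv, S1 hp, S1 hp]
  set n' := n + m * p ^ (s + 1) with hn'
  obtain ⟨w, hw⟩ : ∃ w : R p, Gp p n' * Ep p n' * Hp p n - Gp p n * Ep p n * Hp p n'
      = qnat p (p ^ (s + 1)) * w := by
    have hmk := step2 hp s n m
    rw [← hn'] at hmk
    have := Ideal.Quotient.eq.mp hmk
    rw [Iq, Ideal.mem_span_singleton] at this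
    obtain ⟨w, hw⟩ := this
    exact ⟨w, hw⟩
  have hHn : ι p (Hp p n) ≠ 0 := iota_ne_zero (isUnit_Hp n).ne_zero
  have hHn' : ι p (Hp p n') ≠ 0 := iota_ne_zero (isUnit_Hp n').ne_zero
  obtain ⟨u, hu⟩ := isUnit_iff_exists_inv.mp ((isUnit_Hp (p := p) n').mul (isUnit_Hp n))
  refine ⟨w * u, ?_⟩
  rw [div_sub_div _ _ hHn' hHn, ← map_mul, ← map_mul, ← map_sub]
  have hnum : Gp p n' * Ep p n' * Hp p n - Hp p n' * (Gp p n * Ep p n)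
      = qnat p (p ^ (s + 1)) * w := by linear_combination hw
  rw [hnum]
  rw [div_eq_iff (by rw [← map_mul]; exact iota_ne_zero (((isUnit_Hp (p := p) n').mul (isUnit_Hp n)).ne_zero))]
  rw [← map_mul, ← map_mul]
  exact congrArg (ι p) (by linear_combination - (qnat p (p ^ (s + 1)) * w) * hu)

end Aux

/-- For all `n, m, s ∈ ℕ`:
`A_{1/2}(n+mp^{s+1})/φ(A_{1/2}(⌊n/p⌋+mp^s)) − A_{1/2}(n)/φ(A_{1/2}(⌊n/p⌋)) ∈ [p^{s+1}]_q·R`. -/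
theorem dwork_corollary_2_ii (hp : p ≠ 2) (n m s : ℕ) :
    ∃ r : R p,
      Ahalf p (n + m * p ^ (s + 1)) / phiQ p (Ahalf p (n / p + m * p ^ s)) -
        Ahalf p n / phiQ p (Ahalf p (n / p)) = ι p (qnat p (p ^ (s + 1)) * r) := by
  exact dwork_corollary_2_ii_aux hp n m s

end QDwork
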